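/- The spectral norm of the Nyström residual matrix equals the worst-case approximation error: ‖G − A·Θ⁻¹·Aᵀ‖ = sup_{β ∈ ℝ^n, ‖β‖ ≤ 1} inf_{v ∈ span{g_1, …, g_m}} ‖v − Σ_{i=1}^n β_i k_i‖². -/

import Mathlib

open Matrix
open scoped Matrix.Norms.L2Operator RealInnerProductSpace

lemma aux_dp_nonneg {p : ℕ} (x : Fin p → ℝ) : 0 ≤ x ⬝ᵥ x :=
  Finset.sum_nonneg fun i _ => mul_self_nonneg _

lemma aux_opnorm_eq_sup {p : ℕ} (M : Matrix (Fin p) (Fin p) ℝ) (hsym : Mᵀ = M)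
    (hpsd : ∀ x : Fin p → ℝ, 0 ≤ x ⬝ᵥ M *ᵥ x) :
    ‖M‖ = ⨆ β : {β : Fin p → ℝ // Real.sqrt (β ⬝ᵥ β) ≤ 1}, β.1 ⬝ᵥ M *ᵥ β.1 := by
  have hnorm : ∀ x : Fin p → ℝ,
      ‖(WithLp.equiv 2 (Fin p → ℝ)).symm x‖ = Real.sqrt (x ⬝ᵥ x) := by
    intro x
    rw [EuclideanSpace.norm_eq]; congr 1; simp [dotProduct, sq]
  have hBsymm : ∀ x y : Fin p → ℝ, x ⬝ᵥ M *ᵥ y = y ⬝ᵥ M *ᵥ x := by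
    intro x y
    rw [dotProduct_mulVec, ← hsym, vecMul_transpose, hsym, dotProduct_comm]
  have hmv : ∀ x : Fin p → ℝ, ‖(WithLp.equiv 2 (Fin p → ℝ)).symm (M *ᵥ x)‖
      ≤ ‖M‖ * ‖(WithLp.equiv 2 (Fin p → ℝ)).symm x‖ :=
    fun x => M.l2_opNorm_mulVec ((WithLp.equiv 2 (Fin p → ℝ)).symm x)
  have hform_le : ∀ x : Fin p → ℝ, x ⬝ᵥ M *ᵥ x ≤
      ‖M‖ * (Real.sqrt (x ⬝ᵥ x)) ^ 2 := by
    intro x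
    have h1 : x ⬝ᵥ M *ᵥ x =
        ⟪(WithLp.equiv 2 (Fin p → ℝ)).symm x,
          (WithLp.equiv 2 (Fin p → ℝ)).symm (M *ᵥ x)⟫ := by
      simp [PiLp.inner_apply, dotProduct]
      exact Finset.sum_congr rfl fun i _ => mul_comm _ _
    rw [h1]
    calc ⟪(WithLp.equiv 2 (Fin p → ℝ)).symm x,
          (WithLp.equiv 2 (Fin p → ℝ)).symm (M *ᵥ x)⟫
        ≤ ‖(WithLp.equiv 2 (Fin p → ℝ)).symm x‖ *
            ‖(WithLp.equiv 2 (Fin p → ℝ)).symm (M *ᵥ x)‖ := real_inner_le_norm _ _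
      _ ≤ ‖(WithLp.equiv 2 (Fin p → ℝ)).symm x‖ *
            (‖M‖ * ‖(WithLp.equiv 2 (Fin p → ℝ)).symm x‖) :=
          mul_le_mul_of_nonneg_left (hmv x) (norm_nonneg _)
      _ = ‖M‖ * (Real.sqrt (x ⬝ᵥ x))^2 := by rw [hnorm]; ring
  have hMnn : (0:ℝ) ≤ ‖M‖ := norm_nonneg _
  haveI : Nonempty {β : Fin p → ℝ // Real.sqrt (β ⬝ᵥ β) ≤ 1} := ⟨⟨0, by simp⟩⟩
  set s := ⨆ β : {β : Fin p → ℝ // Real.sqrt (β ⬝ᵥ β) ≤ 1}, β.1 ⬝ᵥ M *ᵥ β.1 with hs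
  have hub : ∀ β : {β : Fin p → ℝ // Real.sqrt (β ⬝ᵥ β) ≤ 1},
      β.1 ⬝ᵥ M *ᵥ β.1 ≤ ‖M‖ := by
    rintro ⟨β, hβ⟩
    have := hform_le β
    have h2 : (Real.sqrt (β ⬝ᵥ β))^2 ≤ 1 := by
      nlinarith [Real.sqrt_nonneg (β ⬝ᵥ β)]
    nlinarith
  have hbdd : BddAbove (Set.range fun β : {β : Fin p → ℝ // Real.sqrt (β ⬝ᵥ β) ≤ 1}
      => β.1 ⬝ᵥ M *ᵥ β.1) := ⟨‖M‖, by rintro _ ⟨β, rfl⟩; exact hub β⟩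
  have hs0 : 0 ≤ s := by
    have := le_ciSup hbdd (⟨0, by simp⟩ : {β : Fin p → ℝ // Real.sqrt (β ⬝ᵥ β) ≤ 1})
    simpa using this
  have hqf : ∀ x : Fin p → ℝ, x ⬝ᵥ M *ᵥ x ≤ s * (x ⬝ᵥ x) := by
    intro x
    rcases eq_or_ne x 0 with rfl | hx
    · simp
    · have hxx : 0 < x ⬝ᵥ x :=
        lt_of_le_of_ne (aux_dp_nonneg x) (Ne.symm (mt dotProduct_self_eq_zero.mp hx))
      set c := Real.sqrt (x ⬝ᵥ x) with hc
      have hcpos : 0 < c := Real.sqrt_pos.mpr hxx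
      have hc2 : c^2 = x ⬝ᵥ x := Real.sq_sqrt hxx.le
      have hz : ((c⁻¹ • x) ⬝ᵥ (c⁻¹ • x)) = 1 := by
        simp only [smul_dotProduct, dotProduct_smul, smul_eq_mul]
        field_simp
        nlinarith
      have hzmem : Real.sqrt ((c⁻¹ • x) ⬝ᵥ (c⁻¹ • x)) ≤ 1 := by
        rw [hz, Real.sqrt_one]
      have := le_ciSup hbdd (⟨c⁻¹ • x, hzmem⟩ :
        {β : Fin p → ℝ // Real.sqrt (β ⬝ᵥ β) ≤ 1})
      simp only [smul_dotProduct, dotProduct_smul, mulVec_smul, smul_eq_mul] at this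
      have h3 : c⁻¹ * (c⁻¹ * (x ⬝ᵥ M *ᵥ x)) ≤ s := this
      calc x ⬝ᵥ M *ᵥ x = c^2 * (c⁻¹ * (c⁻¹ * (x ⬝ᵥ M *ᵥ x))) := by
            field_simp
        _ ≤ c^2 * s := by nlinarith [sq_nonneg c]
        _ = s * (x ⬝ᵥ x) := by rw [hc2]; ring
  -- Cauchy-Schwarz for the semi-inner-product B(x,y) = x ⬝ᵥ M *ᵥ y
  have hCS : ∀ x y : Fin p → ℝ,
      (x ⬝ᵥ M *ᵥ y)^2 ≤ (x ⬝ᵥ M *ᵥ x) * (y ⬝ᵥ M *ᵥ y) := by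
    intro x y
    have hquad : ∀ t : ℝ, 0 ≤ (x ⬝ᵥ M *ᵥ x) * (t*t) + (2 * (x ⬝ᵥ M *ᵥ y)) * t
        + (y ⬝ᵥ M *ᵥ y) := by
      intro t
      have h := hpsd (t • x + y)
      simp only [add_dotProduct, smul_dotProduct, dotProduct_add, dotProduct_smul,
        mulVec_add, mulVec_smul, smul_eq_mul] at h
      rw [hBsymm y x] at h
      linarith [h]
    have := discrim_le_zero hquad
    rw [discrim] at this
    nlinarith
  apply le_antisymm
  · rw [Matrix.l2_opNorm_def]
    apply ContinuousLinearMap.opNorm_le_bound _ hs0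
    intro x
    set xv : Fin p → ℝ := WithLp.equiv 2 (Fin p → ℝ) x with hxv
    have hx' : x = (WithLp.equiv 2 (Fin p → ℝ)).symm xv := rfl
    have happ : ((toEuclideanLin (𝕜 := ℝ) (m := Fin p) (n := Fin p)).trans
        LinearMap.toContinuousLinearMap M) x =
        (WithLp.equiv 2 (Fin p → ℝ)).symm (M *ᵥ xv) := rfl
    rw [happ]
    set y : Fin p → ℝ := M *ᵥ xv with hy
    have hyy : (y ⬝ᵥ y) = xv ⬝ᵥ M *ᵥ y := by
      rw [hBsymm xv y, hy, dotProduct_mulVec, ← hsym, vecMul_transpose, hsym]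
    have h1 : (y ⬝ᵥ y)^2 ≤ (xv ⬝ᵥ M *ᵥ xv) * (y ⬝ᵥ M *ᵥ y) := by
      rw [hyy]; exact hCS xv y
    have h2 : (xv ⬝ᵥ M *ᵥ xv) ≤ s * (xv ⬝ᵥ xv) := hqf xv
    have h3 : (y ⬝ᵥ M *ᵥ y) ≤ s * (y ⬝ᵥ y) := hqf y
    have hyn : ‖(WithLp.equiv 2 (Fin p → ℝ)).symm y‖ = Real.sqrt (y ⬝ᵥ y) := hnorm y
    have hxn : ‖x‖ = Real.sqrt (xv ⬝ᵥ xv) := by rw [hx']; exact hnorm xv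
    rw [hyn, hxn]
    have hynn := aux_dp_nonneg y
    have hxnn := aux_dp_nonneg xv
    have h4 : (y ⬝ᵥ y)^2 ≤ s^2 * (xv ⬝ᵥ xv) * (y ⬝ᵥ y) := by
      nlinarith [hpsd xv, hpsd y]
    rcases eq_or_lt_of_le hynn with h0 | hpos
    · rw [← h0, Real.sqrt_zero]
      positivity
    · have h5 : (y ⬝ᵥ y) ≤ s^2 * (xv ⬝ᵥ xv) := by nlinarith
      calc Real.sqrt (y ⬝ᵥ y) ≤ Real.sqrt (s^2 * (xv ⬝ᵥ xv)) := Real.sqrt_le_sqrt h5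
        _ = s * Real.sqrt (xv ⬝ᵥ xv) := by
            rw [Real.sqrt_mul (sq_nonneg s), Real.sqrt_sq hs0]
  · exact ciSup_le hub


lemma aux_gram_quad {H : Type*} [NormedAddCommGroup H] [InnerProductSpace ℝ H]
    {p : ℕ} (f : Fin p → H) (Θ : Matrix (Fin p) (Fin p) ℝ)
    (hΘ : ∀ i j, Θ i j = ⟪f i, f j⟫) (x : Fin p → ℝ) :
    x ⬝ᵥ Θ *ᵥ x = ⟪∑ j, x j • f j, ∑ j, x j • f j⟫ := by
  rw [sum_inner]
  simp only [inner_sum, real_inner_smul_left, real_inner_smul_right, dotProduct, mulVec,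
    dotProduct, hΘ, Finset.mul_sum]
  exact Finset.sum_congr rfl fun i _ => Finset.sum_congr rfl fun j _ => by ring

/-- The spectral norm of the Nyström residual equals the
worst-case approximation error:
`‖G − AΘ⁻¹Aᵀ‖ = sup_{‖β‖ ≤ 1} inf_{v ∈ span g} ‖v − ∑ᵢ βᵢ kᵢ‖²`. -/
theorem stmt_13 {H : Type*}
    [NormedAddCommGroup H] [InnerProductSpace ℝ H]
    {n m : ℕ} (k : Fin n → H) (g : Fin m → H)
    (hg : LinearIndependent ℝ g)
    (G : Matrix (Fin n) (Fin n) ℝ) (hG : ∀ i j, G i j = ⟪k i, k j⟫)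
    (Θ : Matrix (Fin m) (Fin m) ℝ) (hΘ : ∀ i j, Θ i j = ⟪g i, g j⟫)
    (A : Matrix (Fin n) (Fin m) ℝ) (hA : ∀ i j, A i j = ⟪k i, g j⟫) :
    ‖G - A * Θ⁻¹ * Aᵀ‖ =
      ⨆ β : {β : Fin n → ℝ // Real.sqrt (β ⬝ᵥ β) ≤ 1},
        ⨅ v : Submodule.span ℝ (Set.range g),
          ‖(v : H) - ∑ i, β.1 i • k i‖ ^ 2 := by
  classical
  have hΘsym : Θᵀ = Θ := by
    ext i j; simp only [transpose_apply, hΘ]; exact real_inner_comm _ _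
  have hGsym : Gᵀ = G := by
    ext i j; simp only [transpose_apply, hG]; exact real_inner_comm _ _
  -- Θ is positive definite, hence invertible
  have hΘpd : Θ.PosDef := by
    refine Matrix.PosDef.of_dotProduct_mulVec_pos ?_ fun x hx => ?_
    · show Θᴴ = Θ
      rw [conjTranspose_eq_transpose_of_trivial, hΘsym]
    · show 0 < (star x) ⬝ᵥ (Θ *ᵥ x)
      have hsx : star x = x := by simp
      rw [hsx, aux_gram_quad g Θ hΘ x]
      have hvne : (∑ j, x j • g j) ≠ 0 := fun h0 =>
        hx (funext fun i => Fintype.linearIndependent_iff.mp hg x h0 i)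
      exact lt_of_le_of_ne real_inner_self_nonneg
        (fun h => hvne ((inner_self_eq_zero (𝕜 := ℝ)).mp h.symm))
  have hdet : IsUnit Θ.det := isUnit_iff_ne_zero.mpr hΘpd.det_pos.ne'
  set V := Submodule.span ℝ (Set.range g) with hV
  haveI : FiniteDimensional ℝ V := FiniteDimensional.span_of_finite ℝ (Set.finite_range g)
  set M := G - A * Θ⁻¹ * Aᵀ with hM
  -- key: the infimum equals the quadratic form of M
  have key : ∀ β : Fin n → ℝ,
      (⨅ v : V, ‖(v : H) - ∑ i, β i • k i‖ ^ 2) = β ⬝ᵥ M *ᵥ β := by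
    intro β
    set u : H := ∑ i, β i • k i with hu
    set c : Fin m → ℝ := Θ⁻¹ *ᵥ (Aᵀ *ᵥ β) with hc
    set pv : H := ∑ j, c j • g j with hpv
    have hp_mem : pv ∈ V :=
      Submodule.sum_mem _ fun j _ =>
        Submodule.smul_mem _ _ (Submodule.subset_span ⟨j, rfl⟩)
    have hΘc : Θ *ᵥ c = Aᵀ *ᵥ β := by
      rw [hc, mulVec_mulVec, Matrix.mul_nonsing_inv _ hdet, one_mulVec]
    have hog : ∀ j, ⟪u - pv, g j⟫ = 0 := by
      intro j
      have h1 : ⟪u, g j⟫ = (Aᵀ *ᵥ β) j := by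
        rw [hu, sum_inner]
        simp only [real_inner_smul_left, mulVec, dotProduct, transpose_apply, hA]
        exact Finset.sum_congr rfl fun i _ => by ring
      have h2 : ⟪pv, g j⟫ = (Θ *ᵥ c) j := by
        rw [hpv, sum_inner]
        simp only [real_inner_smul_left, mulVec, dotProduct, hΘ]
        refine Finset.sum_congr rfl fun i _ => ?_
        rw [real_inner_comm]
        ring
      rw [inner_sub_left, h1, h2, hΘc, sub_self]
    have horth : ∀ w ∈ V, ⟪u - pv, w⟫ = 0 := by
      intro w hw
      induction hw using Submodule.span_induction with
      | mem x hx => obtain ⟨j, rfl⟩ := hx; exact hog j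
      | zero => exact inner_zero_right _
      | add x y hx hy ihx ihy => rw [inner_add_right, ihx, ihy, add_zero]
      | smul a x hx ih => rw [real_inner_smul_right, ih, mul_zero]
    -- the infimum is attained at pv
    have hlb : ∀ v : V, ‖pv - u‖ ^ 2 ≤ ‖(v : H) - u‖ ^ 2 := by
      intro v
      have hsplit : (v : H) - u = ((v : H) - pv) + (pv - u) := by abel
      have hinner : ⟪(v : H) - pv, pv - u⟫ = 0 := by
        rw [real_inner_comm, ← neg_sub u pv, inner_neg_left,
          horth _ (Submodule.sub_mem _ v.2 hp_mem), neg_zero]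
      rw [hsplit, norm_add_sq_real, hinner]
      nlinarith [sq_nonneg ‖(v : H) - pv‖]
    have hiInf : (⨅ v : V, ‖(v : H) - u‖ ^ 2) = ‖pv - u‖ ^ 2 := by
      apply le_antisymm
      · exact ciInf_le ⟨0, by rintro _ ⟨v, rfl⟩; positivity⟩ (⟨pv, hp_mem⟩ : V)
      · exact le_ciInf hlb
    rw [hiInf]
    -- compute the squared distance
    have e1 : ‖pv - u‖ ^ 2 = ⟪u - pv, u⟫ := by
      rw [← norm_neg, neg_sub, ← real_inner_self_eq_norm_sq, inner_sub_right,
        horth pv hp_mem, sub_zero]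
    have e3 : ⟪u, u⟫ = β ⬝ᵥ G *ᵥ β := (aux_gram_quad k G hG β).symm
    have hgu : ∀ j, ⟪g j, u⟫ = (Aᵀ *ᵥ β) j := by
      intro j
      rw [hu, inner_sum]
      simp only [real_inner_smul_right, mulVec, dotProduct, transpose_apply]
      refine Finset.sum_congr rfl fun i _ => ?_
      rw [hA, real_inner_comm]
      ring
    have e4 : ⟪pv, u⟫ = c ⬝ᵥ (Aᵀ *ᵥ β) := by
      rw [hpv, sum_inner]
      simp only [real_inner_smul_left]
      exact Finset.sum_congr rfl fun j _ => by rw [hgu j]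
    have e5 : β ⬝ᵥ (A * Θ⁻¹ * Aᵀ) *ᵥ β = c ⬝ᵥ (Aᵀ *ᵥ β) := by
      rw [← mulVec_mulVec, ← mulVec_mulVec, dotProduct_mulVec, ← mulVec_transpose,
        ← hc]
      exact dotProduct_comm _ _
    rw [e1, inner_sub_left, e3, e4, hM, sub_mulVec, dotProduct_sub, e5]
  -- M is symmetric and PSD
  have hMsym : Mᵀ = M := by
    rw [hM, transpose_sub, hGsym, transpose_mul, transpose_mul, transpose_transpose,
      transpose_nonsing_inv, hΘsym, Matrix.mul_assoc]
  have hMpsd : ∀ x : Fin n → ℝ, 0 ≤ x ⬝ᵥ M *ᵥ x := by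
    intro x
    rw [← key x]
    exact le_ciInf fun v => by positivity
  rw [aux_opnorm_eq_sup M hMsym hMpsd]
  exact iSup_congr fun β => (key β.1).symm
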